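/- The pair of maps (Des, g) : B_n ⇄ 2^{[0,n−1]} is a Galois connection, where B_n carries the weak order, 2^{[0,n−1]} (the set of subsets of {0,1,…,n−1}) carries inclusion, Des sends a signed permutation to its descent set, and g sends I ⊆ {0,1,…,n−1} to ζ_I, the largest element of the descent class {w ∈ B_n : Des(w) = I}. In particular Des is order-preserving and surjective, g is order-preserving, and Des(w) ⊆ I ⇔ w ≤ ζ_I for all w ∈ B_n and I ⊆ {0,1,…,n−1}. -/

import Mathlib

open Finset

open scoped Classical

/-- The hyperoctahedral group `𝔅ₙ`, realized as the set of those permutations `w` of `ℤ`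
that satisfy `w (-i) = - w i` for all `i` and fix every integer of absolute value `> n`.
One-line notation: `w₁ ⋯ w_n` with `w_i = w i` for `1 ≤ i ≤ n`. -/
def SignedPerm (n : ℕ) : Set (Equiv.Perm ℤ) :=
  {w | (∀ i : ℤ, w (-i) = - w i) ∧ (∀ i : ℤ, (n : ℤ) < |i| → w i = i)}

/-- The inversion set `Inv(w) = {(i,j) : 1 ≤ i < j ≤ n, w_i > w_j}`. -/
noncomputable def InvSet (n : ℕ) (w : Equiv.Perm ℤ) : Finset (ℤ × ℤ) :=
  ((Finset.Icc (1 : ℤ) (n : ℤ)) ×ˢ (Finset.Icc (1 : ℤ) (n : ℤ))).filter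
    fun p => p.1 < p.2 ∧ w p.2 < w p.1

/-- The set of negative indices `Nega(w) = {i ∈ [n] : w_i < 0}`. -/
noncomputable def NegaSet (n : ℕ) (w : Equiv.Perm ℤ) : Finset ℤ :=
  (Finset.Icc (1 : ℤ) (n : ℤ)).filter fun i => w i < 0

/-- The negative sum pair set `Nsp(w) = {(i,j) : 1 ≤ i < j ≤ n, w_i + w_j < 0}`. -/
noncomputable def NspSet (n : ℕ) (w : Equiv.Perm ℤ) : Finset (ℤ × ℤ) :=
  ((Finset.Icc (1 : ℤ) (n : ℤ)) ×ˢ (Finset.Icc (1 : ℤ) (n : ℤ))).filter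
    fun p => p.1 < p.2 ∧ w p.1 + w p.2 < 0

/-- The Coxeter length of `w ∈ 𝔅ₙ`: `ℓ(w) = #Inv(w) + #Nega(w) + #Nsp(w)`. -/
noncomputable def blen (n : ℕ) (w : Equiv.Perm ℤ) : ℕ :=
  (InvSet n w).card + (NegaSet n w).card + (NspSet n w).card

/-- The left weak order on `𝔅ₙ`: `u ≤ v` iff `ℓ(v) = ℓ(u) + ℓ(v * u⁻¹)`. -/
def wle (n : ℕ) (u v : Equiv.Perm ℤ) : Prop :=
  blen n v = blen n u + blen n (v * u⁻¹)

/-- The Coxeter generators of `𝔅ₙ`: `s₀ = (1,-1)` and `sᵢ = (i,i+1)(-i,-(i+1))` for `i ≥ 1`. -/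
def sB (i : ℕ) : Equiv.Perm ℤ :=
  if i = 0 then Equiv.swap 1 (-1)
  else Equiv.swap (i : ℤ) ((i : ℤ) + 1) * Equiv.swap (-(i : ℤ)) (-((i : ℤ) + 1))

/-- `a[p] = a + p` if `a > 0`, `a - p` if `a < 0` (and `0 ↦ 0`). -/
def shiftFun (p : ℕ) (b : ℤ) : ℤ :=
  if 0 < b then b + (p : ℤ) else if b < 0 then b - (p : ℤ) else 0

/-- `w` is the shifted product `u × v ∈ 𝔅_{p+q}` of `u ∈ 𝔅_p` and `v ∈ 𝔅_q`:
its one-line notation is `(u₁, …, u_p, v₁[p], …, v_q[p])`. -/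
def IsSProd (p q : ℕ) (u v w : Equiv.Perm ℤ) : Prop :=
  w ∈ SignedPerm (p + q) ∧
  (∀ a : ℤ, 1 ≤ a → a ≤ (p : ℤ) → w a = u a) ∧
  (∀ a : ℤ, (p : ℤ) < a → a ≤ (p : ℤ) + (q : ℤ) → w a = shiftFun p (v (a - (p : ℤ))))

/-- `ξ` is a `(p,q)`-shuffle: an element of `𝔅_{p+q}` with positive entries (a permutation)
that is increasing on each of the blocks `[1,p]` and `[p+1,p+q]`. -/
def IsShuffle (p q : ℕ) (ξ : Equiv.Perm ℤ) : Prop :=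
  ξ ∈ SignedPerm (p + q) ∧
  (∀ a : ℤ, 1 ≤ a → a ≤ (p : ℤ) + (q : ℤ) → 0 < ξ a) ∧
  (∀ a b : ℤ, 1 ≤ a → a < b → b ≤ (p : ℤ) → ξ a < ξ b) ∧
  (∀ a b : ℤ, (p : ℤ) < a → a < b → b ≤ (p : ℤ) + (q : ℤ) → ξ a < ξ b)

/-- `w` is the standard signed permutation `sts(a₁ ⋯ a_m)` of the word `a₁ ⋯ a_m = a 1, …, a m`
(of nonzero integers): the unique `w ∈ 𝔅_m` with the same negative index set and
`|w_i| < |w_j| ↔ |a_i| ≤ |a_j|` for `1 ≤ i < j ≤ m`. -/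
def IsSts (m : ℕ) (a : ℤ → ℤ) (w : Equiv.Perm ℤ) : Prop :=
  w ∈ SignedPerm m ∧
  (∀ i : ℤ, 1 ≤ i → i ≤ (m : ℤ) → (w i < 0 ↔ a i < 0)) ∧
  (∀ i j : ℤ, 1 ≤ i → i < j → j ≤ (m : ℤ) → (|w i| < |w j| ↔ |a i| ≤ |a j|))

/-- The standard signed permutation of a word, as a function. -/
noncomputable def sts (m : ℕ) (a : ℤ → ℤ) : Equiv.Perm ℤ :=
  if h : ∃ w, IsSts m a w then h.choose else 1

/-- Descent set of `w ∈ 𝔅ₙ`: `Des(w) = {i ∈ [0,n-1] : w_i > w_{i+1}}` with `w₀ = 0`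
(note `w 0 = 0` holds automatically). -/
def DesSet (n : ℕ) (w : Equiv.Perm ℤ) : Finset ℕ :=
  (Finset.range n).filter fun i => w ((i : ℤ) + 1) < w (i : ℤ)

/-- Global descent set of `u ∈ 𝔅ₙ`. -/
noncomputable def GDesSet (n : ℕ) (u : Equiv.Perm ℤ) : Finset ℕ :=
  (Finset.Ico 1 n).filter fun i =>
    ∀ j k : ℤ, 1 ≤ j → j ≤ (i : ℤ) → (i : ℤ) < k → k ≤ (n : ℤ) → u k < u j

/-- `m` is the meet (greatest lower bound) of `x` and `y` within `S`, w.r.t. the weak order. -/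
def IsMeetIn (n : ℕ) (S : Set (Equiv.Perm ℤ)) (x y m : Equiv.Perm ℤ) : Prop :=
  m ∈ S ∧ wle n m x ∧ wle n m y ∧ ∀ z ∈ S, wle n z x → wle n z y → wle n z m

/-- `j` is the join (least upper bound) of `x` and `y` within `S`, w.r.t. the weak order. -/
def IsJoinIn (n : ℕ) (S : Set (Equiv.Perm ℤ)) (x y j : Equiv.Perm ℤ) : Prop :=
  j ∈ S ∧ wle n x j ∧ wle n y j ∧ ∀ z ∈ S, wle n x z → wle n y z → wle n j z

/-- The set `𝔅_p × 𝔅_{q,K} ⊆ 𝔅_{p+q}` of shifted products `u × v` with `u ∈ 𝔅_p`,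
`v ∈ 𝔅_q`, `Nega(v) = K`. -/
def SProdComp (p q : ℕ) (K : Finset ℤ) : Set (Equiv.Perm ℤ) :=
  {w | ∃ u v : Equiv.Perm ℤ, u ∈ SignedPerm p ∧ v ∈ SignedPerm q ∧ NegaSet q v = K ∧
        IsSProd p q u v w}

/-- `w` is the iterated shifted product `u⁽¹⁾ × ⋯ × u⁽ᵏ⁾` of the list `us` of signed
permutations with block sizes given by the list `ps`. -/
def IsMultiSProd (ps : List ℕ) (us : List (Equiv.Perm ℤ)) (w : Equiv.Perm ℤ) : Prop :=
  w ∈ SignedPerm ps.sum ∧ us.length = ps.length ∧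
  ∀ i < ps.length,
    us.getD i 1 ∈ SignedPerm (ps.getD i 0) ∧
    ∀ a : ℤ, ((ps.take i).sum : ℤ) < a → a ≤ ((ps.take i).sum : ℤ) + (ps.getD i 0 : ℤ) →
      w a = shiftFun ((ps.take i).sum) ((us.getD i 1) (a - ((ps.take i).sum : ℤ)))

/-- The subset `𝔅_{p₁} × 𝔅_{p₂} × ⋯ × 𝔅_{p_k}` of `𝔅_{p₁+⋯+p_k}`. -/
def MultiProdSet (ps : List ℕ) : Set (Equiv.Perm ℤ) :=
  {w | ∃ us, IsMultiSProd ps us w}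

/-- The `(L₂,…,L_k)`-component `𝔅_{p₁} × 𝔅_{p₂,L₂} × ⋯ × 𝔅_{p_k,L_k}`, where
`Ls.getD (i-1) ∅` is the prescribed negative index set of the `(i+1)`-st factor. -/
def ComponentSet (ps : List ℕ) (Ls : List (Finset ℤ)) : Set (Equiv.Perm ℤ) :=
  {w | ∃ us, IsMultiSProd ps us w ∧
        ∀ i, 1 ≤ i → i < ps.length →
          NegaSet (ps.getD i 0) (us.getD i 1) = Ls.getD (i - 1) ∅}

/-- `ξ ∈ Sh(p₁,…,p_k)`: a permutation in `𝔅_{p₁+⋯+p_k}` (all entries positive)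
increasing on each consecutive block. -/
def IsMultiShuffle (ps : List ℕ) (ξ : Equiv.Perm ℤ) : Prop :=
  ξ ∈ SignedPerm ps.sum ∧
  (∀ a : ℤ, 1 ≤ a → a ≤ (ps.sum : ℤ) → 0 < ξ a) ∧
  ∀ i < ps.length, ∀ a b : ℤ,
    ((ps.take i).sum : ℤ) < a → a < b → b ≤ ((ps.take i).sum : ℤ) + (ps.getD i 0 : ℤ) →
      ξ a < ξ b

-- ===== auxiliary development =====

theorem Equiv.Perm.apply_inv_self (f : Equiv.Perm ℤ) (x : ℤ) : f (f⁻¹ x) = x :=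
  Equiv.apply_symm_apply f x

theorem Equiv.Perm.inv_apply_self (f : Equiv.Perm ℤ) (x : ℤ) : f⁻¹ (f x) = x :=
  Equiv.symm_apply_apply f x

section AuxGalois
variable {n : ℕ} {w u v : Equiv.Perm ℤ}

lemma sp_neg (hw : w ∈ SignedPerm n) (a : ℤ) : w (-a) = - w a := hw.1 a

lemma sp_zero (hw : w ∈ SignedPerm n) : w 0 = 0 := by
  have h := hw.1 0
  simp at h
  omega

lemma sp_eq_zero_iff (hw : w ∈ SignedPerm n) {a : ℤ} : w a = 0 ↔ a = 0 := by
  constructor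
  · intro h
    have : w a = w 0 := by rw [h, sp_zero hw]
    exact w.injective this
  · rintro rfl; exact sp_zero hw

lemma sp_bound (hw : w ∈ SignedPerm n) {a : ℤ} (ha : |a| ≤ (n : ℤ)) : |w a| ≤ (n : ℤ) := by
  by_contra h
  push_neg at h
  have h1 : w (w a) = w a := hw.2 _ h
  have h2 : w a = a := w.injective h1
  rw [h2] at h
  omega

lemma sp_inv (hw : w ∈ SignedPerm n) : w⁻¹ ∈ SignedPerm n := by
  constructor
  · intro i
    apply w.injective
    rw [Equiv.Perm.apply_inv_self, hw.1, Equiv.Perm.apply_inv_self]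
  · intro i hi
    apply w.injective
    rw [Equiv.Perm.apply_inv_self, hw.2 i hi]

lemma sp_mul (hu : u ∈ SignedPerm n) (hv : v ∈ SignedPerm n) : u * v ∈ SignedPerm n := by
  constructor
  · intro i
    simp only [Equiv.Perm.mul_apply, hv.1, hu.1]
  · intro i hi
    simp only [Equiv.Perm.mul_apply, hv.2 i hi, hu.2 i hi]

noncomputable def NFull (n : ℕ) (w : Equiv.Perm ℤ) : Finset (ℤ × ℤ) :=
  ((Finset.Icc (-(n : ℤ)) (n : ℤ)) ×ˢ (Finset.Icc (-(n : ℤ)) (n : ℤ))).filter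
    fun p => p.1 < p.2 ∧ p.1 + p.2 ≠ 0 ∧ w p.2 < w p.1

lemma mem_NF {a b : ℤ} :
    (a, b) ∈ NFull n w ↔ -(n:ℤ) ≤ a ∧ a ≤ n ∧ -(n:ℤ) ≤ b ∧ b ≤ n ∧ a < b ∧ a + b ≠ 0 ∧ w b < w a := by
  unfold NFull
  simp only [Finset.mem_filter, Finset.mem_product, Finset.mem_Icc]
  tauto

lemma mem_Inv {a b : ℤ} :
    (a, b) ∈ InvSet n w ↔ 1 ≤ a ∧ a ≤ n ∧ 1 ≤ b ∧ b ≤ n ∧ a < b ∧ w b < w a := by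
  unfold InvSet
  simp only [Finset.mem_filter, Finset.mem_product, Finset.mem_Icc]
  tauto

lemma mem_Nega {a : ℤ} : a ∈ NegaSet n w ↔ 1 ≤ a ∧ a ≤ n ∧ w a < 0 := by
  unfold NegaSet
  simp only [Finset.mem_filter, Finset.mem_Icc]
  tauto

lemma mem_Nsp {a b : ℤ} :
    (a, b) ∈ NspSet n w ↔ 1 ≤ a ∧ a ≤ n ∧ 1 ≤ b ∧ b ≤ n ∧ a < b ∧ w a + w b < 0 := by
  unfold NspSet
  simp only [Finset.mem_filter, Finset.mem_product, Finset.mem_Icc]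
  tauto


lemma NFull_eq (hw : w ∈ SignedPerm n) :
    NFull n w =
      (InvSet n w) ∪ ((InvSet n w).image (fun p => (-p.2, -p.1))) ∪
      ((NegaSet n w).image (fun i => ((0:ℤ), i))) ∪ ((NegaSet n w).image (fun i => (-i, (0:ℤ)))) ∪
      ((NspSet n w).image (fun p => (-p.1, p.2))) ∪ ((NspSet n w).image (fun p => (-p.2, p.1))) := by
  ext ⟨a, b⟩
  simp only [Finset.mem_union, Finset.mem_image, Prod.ext_iff, Prod.exists]
  constructor
  · intro h
    rw [mem_NF] at h
    obtain ⟨h1, h2, h3, h4, h5, h6, h7⟩ := h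
    by_cases ha1 : 1 ≤ a
    · exact Or.inl (Or.inl (Or.inl (Or.inl (Or.inl (mem_Inv.mpr ⟨by omega, by omega, by omega, by omega, h5, h7⟩)))))
    · by_cases hb1 : b ≤ -1
      · refine Or.inl (Or.inl (Or.inl (Or.inl (Or.inr ⟨-b, -a, ?_, by omega, by omega⟩))))
        rw [mem_Inv]
        rw [sp_neg hw, sp_neg hw]
        refine ⟨by omega, by omega, by omega, by omega, by omega, by omega⟩
      · by_cases ha0 : a = 0
        · subst ha0
          refine Or.inl (Or.inl (Or.inl (Or.inr ⟨b, ?_, rfl, rfl⟩)))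
          rw [mem_Nega]
          rw [sp_zero hw] at h7
          exact ⟨by omega, by omega, h7⟩
        · by_cases hb0 : b = 0
          · subst hb0
            refine Or.inl (Or.inl (Or.inr ⟨-a, ?_, by omega, rfl⟩))
            rw [mem_Nega, sp_neg hw]
            rw [sp_zero hw] at h7
            exact ⟨by omega, by omega, by omega⟩
          · -- a ≤ -1, b ≥ 1
            by_cases hab : 0 < a + b
            · refine Or.inl (Or.inr ⟨-a, b, ?_, by omega, by omega⟩)
              rw [mem_Nsp, sp_neg hw]
              refine ⟨by omega, by omega, by omega, by omega, by omega, by omega⟩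
            · refine Or.inr ⟨b, -a, ?_, by omega, by omega⟩
              rw [mem_Nsp, sp_neg hw]
              refine ⟨by omega, by omega, by omega, by omega, by omega, by omega⟩
  · intro h
    rw [mem_NF]
    rcases h with ((((h | ⟨a', b', h, e1, e2⟩) | ⟨a', h, e1, e2⟩) | ⟨a', h, e1, e2⟩) | ⟨a', b', h, e1, e2⟩) | ⟨a', b', h, e1, e2⟩
    · rw [mem_Inv] at h
      exact ⟨by omega, by omega, by omega, by omega, by omega, by omega, h.2.2.2.2.2⟩
    · rw [mem_Inv] at h
      subst e1; subst e2
      rw [sp_neg hw, sp_neg hw]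
      obtain ⟨k1, k2, k3, k4, k5, k6⟩ := h
      exact ⟨by omega, by omega, by omega, by omega, by omega, by omega, by omega⟩
    · rw [mem_Nega] at h
      subst e1; subst e2
      rw [sp_zero hw]
      exact ⟨by omega, by omega, by omega, by omega, by omega, by omega, h.2.2⟩
    · rw [mem_Nega] at h
      subst e1; subst e2
      rw [sp_zero hw, sp_neg hw]
      obtain ⟨k1, k2, k3⟩ := h
      exact ⟨by omega, by omega, by omega, by omega, by omega, by omega, by omega⟩
    · rw [mem_Nsp] at h
      subst e1; subst e2
      rw [sp_neg hw]
      obtain ⟨k1, k2, k3, k4, k5, k6⟩ := h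
      exact ⟨by omega, by omega, by omega, by omega, by omega, by omega, by omega⟩
    · rw [mem_Nsp] at h
      subst e1; subst e2
      rw [sp_neg hw]
      obtain ⟨k1, k2, k3, k4, k5, k6⟩ := h
      exact ⟨by omega, by omega, by omega, by omega, by omega, by omega, by omega⟩

lemma card_NFull (hw : w ∈ SignedPerm n) : (NFull n w).card = 2 * blen n w := by
  classical
  -- signature lemmas
  have s1 : ∀ p ∈ InvSet n w, 1 ≤ p.1 ∧ 1 ≤ p.2 := by
    rintro ⟨a, b⟩ h; rw [mem_Inv] at h; exact ⟨h.1, h.2.2.1⟩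
  have s2 : ∀ p ∈ (InvSet n w).image (fun p => (-p.2, -p.1)), p.1 ≤ -1 ∧ p.2 ≤ -1 := by
    rintro ⟨a, b⟩ h
    simp only [Finset.mem_image, Prod.ext_iff, Prod.exists] at h
    obtain ⟨a', b', h, e1, e2⟩ := h
    rw [mem_Inv] at h; omega
  have s3 : ∀ p ∈ (NegaSet n w).image (fun i => ((0:ℤ), i)), p.1 = 0 ∧ 1 ≤ p.2 := by
    rintro ⟨a, b⟩ h
    simp only [Finset.mem_image, Prod.ext_iff, Prod.exists] at h
    obtain ⟨a', h, e1, e2⟩ := h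
    rw [mem_Nega] at h; omega
  have s4 : ∀ p ∈ (NegaSet n w).image (fun i => (-i, (0:ℤ))), p.1 ≤ -1 ∧ p.2 = 0 := by
    rintro ⟨a, b⟩ h
    simp only [Finset.mem_image, Prod.ext_iff, Prod.exists] at h
    obtain ⟨a', h, e1, e2⟩ := h
    rw [mem_Nega] at h; omega
  have s5 : ∀ p ∈ (NspSet n w).image (fun p => (-p.1, p.2)), p.1 ≤ -1 ∧ 1 ≤ p.2 ∧ 0 < p.1 + p.2 := by
    rintro ⟨a, b⟩ h
    simp only [Finset.mem_image, Prod.ext_iff, Prod.exists] at h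
    obtain ⟨a', b', h, e1, e2⟩ := h
    rw [mem_Nsp] at h; omega
  have s6 : ∀ p ∈ (NspSet n w).image (fun p => (-p.2, p.1)), p.1 ≤ -1 ∧ 1 ≤ p.2 ∧ p.1 + p.2 < 0 := by
    rintro ⟨a, b⟩ h
    simp only [Finset.mem_image, Prod.ext_iff, Prod.exists] at h
    obtain ⟨a', b', h, e1, e2⟩ := h
    rw [mem_Nsp] at h; omega
  rw [NFull_eq hw]
  rw [Finset.card_union_of_disjoint (by
    rw [Finset.disjoint_left]; intro p h1 h2
    rcases Finset.mem_union.mp h1 with h1 | h1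
    · rcases Finset.mem_union.mp h1 with h1 | h1
      · rcases Finset.mem_union.mp h1 with h1 | h1
        · rcases Finset.mem_union.mp h1 with h1 | h1
          · have := s1 p h1; have := s6 p h2; omega
          · have := s2 p h1; have := s6 p h2; omega
        · have := s3 p h1; have := s6 p h2; omega
      · have := s4 p h1; have := s6 p h2; omega
    · have := s5 p h1; have := s6 p h2; omega)]
  rw [Finset.card_union_of_disjoint (by
    rw [Finset.disjoint_left]; intro p h1 h2
    rcases Finset.mem_union.mp h1 with h1 | h1
    · rcases Finset.mem_union.mp h1 with h1 | h1
      · rcases Finset.mem_union.mp h1 with h1 | h1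
        · have := s1 p h1; have := s5 p h2; omega
        · have := s2 p h1; have := s5 p h2; omega
      · have := s3 p h1; have := s5 p h2; omega
    · have := s4 p h1; have := s5 p h2; omega)]
  rw [Finset.card_union_of_disjoint (by
    rw [Finset.disjoint_left]; intro p h1 h2
    rcases Finset.mem_union.mp h1 with h1 | h1
    · rcases Finset.mem_union.mp h1 with h1 | h1
      · have := s1 p h1; have := s4 p h2; omega
      · have := s2 p h1; have := s4 p h2; omega
    · have := s3 p h1; have := s4 p h2; omega)]
  rw [Finset.card_union_of_disjoint (by
    rw [Finset.disjoint_left]; intro p h1 h2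
    rcases Finset.mem_union.mp h1 with h1 | h1
    · have := s1 p h1; have := s3 p h2; omega
    · have := s2 p h1; have := s3 p h2; omega)]
  rw [Finset.card_union_of_disjoint (by
    rw [Finset.disjoint_left]; intro p h1 h2
    have := s1 p h1; have := s2 p h2; omega)]
  have i2 : Function.Injective (fun p : ℤ × ℤ => (-p.2, -p.1)) := by
    intro p q h; simp only [Prod.ext_iff] at h ⊢; omega
  have i3 : Function.Injective (fun i : ℤ => ((0:ℤ), i)) := by
    intro p q h; simp only [Prod.ext_iff] at h; omega
  have i4 : Function.Injective (fun i : ℤ => (-i, (0:ℤ))) := by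
    intro p q h; simp only [Prod.ext_iff] at h; omega
  have i5 : Function.Injective (fun p : ℤ × ℤ => (-p.1, p.2)) := by
    intro p q h; simp only [Prod.ext_iff] at h ⊢; omega
  have i6 : Function.Injective (fun p : ℤ × ℤ => (-p.2, p.1)) := by
    intro p q h; simp only [Prod.ext_iff] at h ⊢; omega
  rw [Finset.card_image_of_injective _ i2, Finset.card_image_of_injective _ i3,
    Finset.card_image_of_injective _ i4, Finset.card_image_of_injective _ i5,
    Finset.card_image_of_injective _ i6]
  unfold blen
  ring

lemma NFull_mul_inv (hu : u ∈ SignedPerm n) (hv : v ∈ SignedPerm n) :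
    NFull n (v * u⁻¹) =
      ((NFull n v \ NFull n u).image fun p => (u p.1, u p.2)) ∪
      ((NFull n u \ NFull n v).image fun p => (u p.2, u p.1)) := by
  have hub : ∀ {a : ℤ}, -(n:ℤ) ≤ a → a ≤ n → -(n:ℤ) ≤ u a ∧ u a ≤ n := by
    intro a h1 h2
    have := sp_bound hu (a := a) (by rw [abs_le]; exact ⟨h1, h2⟩)
    rw [abs_le] at this; exact this
  have huib : ∀ {a : ℤ}, -(n:ℤ) ≤ a → a ≤ n → -(n:ℤ) ≤ u⁻¹ a ∧ u⁻¹ a ≤ n := by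
    intro a h1 h2
    have := sp_bound (sp_inv hu) (a := a) (by rw [abs_le]; exact ⟨h1, h2⟩)
    rw [abs_le] at this; exact this
  ext ⟨c, d⟩
  simp only [Finset.mem_union, Finset.mem_image, Prod.ext_iff, Prod.exists, Finset.mem_sdiff]
  constructor
  · intro h
    rw [mem_NF] at h
    obtain ⟨h1, h2, h3, h4, h5, h6, h7⟩ := h
    simp only [Equiv.Perm.mul_apply] at h7
    have hne : u⁻¹ c ≠ u⁻¹ d := fun e => by have := (Equiv.injective u⁻¹) e; omega
    have hsum : u⁻¹ c + u⁻¹ d ≠ 0 := by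
      intro e
      have : u⁻¹ c = - u⁻¹ d := by omega
      have : c = -d := by
        have := congrArg u this
        rw [Equiv.Perm.apply_inv_self, sp_neg hu, Equiv.Perm.apply_inv_self] at this
        exact this
      omega
    rcases lt_or_gt_of_ne hne with hlt | hgt
    · refine Or.inl ⟨u⁻¹ c, u⁻¹ d, ⟨?_, ?_⟩, by simp, by simp⟩
      · rw [mem_NF]
        refine ⟨(huib h1 h2).1, (huib h1 h2).2, (huib h3 h4).1, (huib h3 h4).2, hlt, hsum, ?_⟩
        simpa using h7
      · rw [mem_NF]
        intro hc
        have := hc.2.2.2.2.2.2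
        simp only [Equiv.Perm.apply_inv_self] at this
        omega
    · refine Or.inr ⟨u⁻¹ d, u⁻¹ c, ⟨?_, ?_⟩, by simp, by simp⟩
      · rw [mem_NF]
        refine ⟨(huib h3 h4).1, (huib h3 h4).2, (huib h1 h2).1, (huib h1 h2).2, hgt, by omega, ?_⟩
        simp only [Equiv.Perm.apply_inv_self]
        omega
      · rw [mem_NF]
        intro hc
        have := hc.2.2.2.2.2.2
        simpa using h7.trans this
  · intro h
    rw [mem_NF]
    rcases h with ⟨a, b, ⟨hm, hnm⟩, e1, e2⟩ | ⟨a, b, ⟨hm, hnm⟩, e1, e2⟩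
    · rw [mem_NF] at hm
      obtain ⟨h1, h2, h3, h4, h5, h6, h7⟩ := hm
      subst e1; subst e2
      have hlt : u a < u b := by
        rcases lt_or_gt_of_ne (fun e => by have := Equiv.injective u e; omega : u a ≠ u b) with h | h
        · exact h
        · exfalso; apply hnm; rw [mem_NF]; exact ⟨h1, h2, h3, h4, h5, h6, h⟩
      have hsum : u a + u b ≠ 0 := by
        intro e
        have : u a = u (-b) := by rw [sp_neg hu]; omega
        have := Equiv.injective u this
        omega
      refine ⟨(hub h1 h2).1, (hub h1 h2).2, (hub h3 h4).1, (hub h3 h4).2, hlt, hsum, ?_⟩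
      simp only [Equiv.Perm.mul_apply, Equiv.Perm.inv_apply_self]
      exact h7
    · rw [mem_NF] at hm
      obtain ⟨h1, h2, h3, h4, h5, h6, h7⟩ := hm
      subst e1; subst e2
      have hvlt : v a < v b := by
        rcases lt_or_gt_of_ne (fun e => by have := Equiv.injective v e; omega : v a ≠ v b) with h | h
        · exact h
        · exfalso; apply hnm; rw [mem_NF]; exact ⟨h1, h2, h3, h4, h5, h6, h⟩
      have hsum : u b + u a ≠ 0 := by
        intro e
        have : u a = u (-b) := by rw [sp_neg hu]; omega
        have := Equiv.injective u this
        omega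
      refine ⟨(hub h3 h4).1, (hub h3 h4).2, (hub h1 h2).1, (hub h1 h2).2, h7, hsum, ?_⟩
      simp only [Equiv.Perm.mul_apply, Equiv.Perm.inv_apply_self]
      exact hvlt

lemma card_NFull_mul_inv (hu : u ∈ SignedPerm n) (hv : v ∈ SignedPerm n) :
    (NFull n (v * u⁻¹)).card = (NFull n v \ NFull n u).card + (NFull n u \ NFull n v).card := by
  rw [NFull_mul_inv hu hv]
  have hinj1 : Function.Injective (fun p : ℤ × ℤ => (u p.1, u p.2)) := by
    intro p q h
    simp only [Prod.ext_iff] at h ⊢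
    exact ⟨Equiv.injective u h.1, Equiv.injective u h.2⟩
  have hinj2 : Function.Injective (fun p : ℤ × ℤ => (u p.2, u p.1)) := by
    intro p q h
    simp only [Prod.ext_iff] at h ⊢
    exact ⟨Equiv.injective u h.2, Equiv.injective u h.1⟩
  rw [Finset.card_union_of_disjoint, Finset.card_image_of_injective _ hinj1,
    Finset.card_image_of_injective _ hinj2]
  rw [Finset.disjoint_left]
  rintro ⟨c, d⟩ hc1 hc2
  simp only [Finset.mem_image, Prod.ext_iff, Prod.exists, Finset.mem_sdiff] at hc1 hc2
  obtain ⟨a, b, ⟨hm, _⟩, e1, e2⟩ := hc1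
  obtain ⟨a', b', ⟨hm', _⟩, e1', e2'⟩ := hc2
  rw [mem_NF] at hm hm'
  have ha : a = b' := Equiv.injective u (by rw [e1, e1'])
  have hb : b = a' := Equiv.injective u (by rw [e2, e2'])
  omega

lemma wle_iff (hu : u ∈ SignedPerm n) (hv : v ∈ SignedPerm n) :
    wle n u v ↔ NFull n u ⊆ NFull n v := by
  have hx : v * u⁻¹ ∈ SignedPerm n := sp_mul hv (sp_inv hu)
  have h1 := card_NFull hu
  have h2 := card_NFull hv
  have h3 := card_NFull hx
  have h4 := card_NFull_mul_inv hu hv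
  have e1 : (NFull n v \ NFull n u).card + (NFull n v ∩ NFull n u).card = (NFull n v).card :=
    Finset.card_sdiff_add_card_inter _ _
  have e2 : (NFull n u \ NFull n v).card + (NFull n u ∩ NFull n v).card = (NFull n u).card :=
    Finset.card_sdiff_add_card_inter _ _
  have e3 : (NFull n v ∩ NFull n u).card = (NFull n u ∩ NFull n v).card := by
    rw [Finset.inter_comm]
  constructor
  · intro hle
    unfold wle at hle
    have h0 : (NFull n u \ NFull n v).card = 0 := by omega
    rwa [Finset.card_eq_zero, Finset.sdiff_eq_empty_iff_subset] at h0
  · intro hsub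
    have h0 : (NFull n u \ NFull n v).card = 0 := by
      rw [Finset.card_eq_zero, Finset.sdiff_eq_empty_iff_subset]; exact hsub
    unfold wle
    omega

lemma sB_formula (x y : ℤ) (hx0 : x ≠ 0)
    (hy2 : (x = -1 ∧ y = 1) ∨ (x ≠ -1 ∧ y = x + 1)) :
    ∀ z : ℤ, (sB (max x (-x-1)).toNat) z =
      if z = x then y else if z = y then x else if z = -x then -y else if z = -y then -x else z := by
  intro z
  have hj : ((max x (-x-1)).toNat : ℤ) = max x (-x-1) := by
    rw [Int.toNat_of_nonneg]; omega
  have hj0 : (max x (-x-1)).toNat = 0 ↔ x = -1 := by omega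
  have hswap : ∀ a b z : ℤ, (Equiv.swap a b) z = if z = a then b else if z = b then a else z :=
    fun a b z => Equiv.swap_apply_def a b z
  rcases hy2 with ⟨e1, e2⟩ | ⟨e1, e2⟩
  · have hj' : (max x (-x-1)).toNat = 0 := hj0.mpr e1
    have hsB : sB (max x (-x-1)).toNat = Equiv.swap 1 (-1) := by
      rw [hj']; unfold sB; simp
    rw [hsB, hswap]
    split_ifs <;> omega
  · have hjne : (max x (-x-1)).toNat ≠ 0 := fun e => e1 (hj0.mp e)
    have hsB : (sB (max x (-x-1)).toNat) z =
        (Equiv.swap (((max x (-x-1)).toNat : ℤ)) (((max x (-x-1)).toNat : ℤ) + 1))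
          ((Equiv.swap (-((max x (-x-1)).toNat : ℤ)) (-(((max x (-x-1)).toNat : ℤ) + 1))) z) := by
      unfold sB; rw [if_neg hjne]; rfl
    rw [hsB, hswap, hswap, hj]
    rcases lt_or_gt_of_ne hx0 with hneg | hpos
    · rw [show max x (-x-1) = -x-1 from by omega]
      split_ifs <;> omega
    · rw [show max x (-x-1) = x from by omega]
      split_ifs <;> omega

lemma sigma_flip (σ : Equiv.Perm ℤ) (x y : ℤ) (hx0 : x ≠ 0)
    (hy2 : (x = -1 ∧ y = 1) ∨ (x ≠ -1 ∧ y = x + 1))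
    (hσ : ∀ z : ℤ, σ z =
      if z = x then y else if z = y then x else if z = -x then -y else if z = -y then -x else z) :
    ∀ z1 z2 : ℤ, z1 < z2 → σ z2 < σ z1 →
      (z1 = x ∧ z2 = y) ∨ (z1 = -y ∧ z2 = -x) ∨
      (x = -1 ∧ y = 1 ∧ z1 = -1 ∧ z2 = 0) ∨ (x = -1 ∧ y = 1 ∧ z1 = 0 ∧ z2 = 1) := by
  intro z1 z2 h1 h2
  rw [hσ z1, hσ z2] at h2
  rcases hy2 with ⟨e1, e2⟩ | ⟨e1, e2⟩ <;>
    (split_ifs at h2 <;> omega)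

lemma sigma_sp {n : ℕ} (σ : Equiv.Perm ℤ) (x y : ℤ) (hx0 : x ≠ 0) (hy0 : y ≠ 0)
    (hxb : -(n:ℤ) ≤ x ∧ x ≤ n) (hyb : -(n:ℤ) ≤ y ∧ y ≤ n)
    (hσ : ∀ z : ℤ, σ z =
      if z = x then y else if z = y then x else if z = -x then -y else if z = -y then -x else z) :
    σ ∈ SignedPerm n := by
  constructor
  · intro z
    rw [hσ, hσ]
    split_ifs <;> omega
  · intro z hz
    rw [lt_abs] at hz
    rw [hσ]
    split_ifs <;> omega

lemma des_iff {i : ℕ} :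
    i ∈ DesSet n w ↔ i < n ∧ ((i:ℤ), (i:ℤ)+1) ∈ NFull n w := by
  unfold DesSet
  rw [Finset.mem_filter, Finset.mem_range, mem_NF]
  constructor
  · rintro ⟨h1, h2⟩
    refine ⟨h1, by omega, by omega, by omega, by push_cast; omega, by omega, by omega, h2⟩
  · rintro ⟨h1, h⟩
    exact ⟨h1, h.2.2.2.2.2.2⟩

lemma step (hw : w ∈ SignedPerm n) {i : ℕ} (hi : i < n) (hdes : i ∉ DesSet n w) :
    ∃ w', w' ∈ SignedPerm n ∧ NFull n w ⊆ NFull n w' ∧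
      (NFull n w).card < (NFull n w').card ∧ DesSet n w' ⊆ DesSet n w ∪ {i} := by
  classical
  set c : ℤ := w (i : ℤ) with hc
  set d : ℤ := w ((i : ℤ) + 1) with hd
  have hcd : c < d := by
    have hne : c ≠ d := fun e => by
      have := w.injective e; omega
    have : ¬ (d < c) := by
      intro hlt
      exact hdes (by unfold DesSet; rw [Finset.mem_filter, Finset.mem_range]; exact ⟨hi, hlt⟩)
    omega
  have hd0 : d ≠ 0 := fun e => by
    have := (sp_eq_zero_iff hw).mp e; omega
  have hdb : -(n:ℤ) ≤ d ∧ d ≤ n := by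
    have := sp_bound hw (a := (i:ℤ)+1) (by rw [abs_le]; constructor <;> push_cast <;> omega)
    rwa [abs_le] at this
  have hcb : -(n:ℤ) ≤ c ∧ c ≤ n := by
    have := sp_bound hw (a := (i:ℤ)) (by rw [abs_le]; constructor <;> push_cast <;> omega)
    rwa [abs_le] at this
  obtain ⟨c', hc'0, hc'd, hc'b1, hc'b2, hposc'⟩ :
      ∃ c' : ℤ, c' ≠ 0 ∧ c' < d ∧ -(n:ℤ) ≤ c' ∧ c' ≤ n ∧ w⁻¹ c' ≤ (i : ℤ) := by
    by_cases h : i = 0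
    · have hc0 : c = 0 := by rw [hc, h]; simpa using sp_zero hw
      refine ⟨-d, by omega, by omega, by omega, by omega, ?_⟩
      have h1 : w⁻¹ (-d) = -w⁻¹ d := sp_neg (sp_inv hw) d
      rw [h1, hd, Equiv.Perm.inv_apply_self]
      omega
    · refine ⟨c, ?_, hcd, hcb.1, hcb.2, ?_⟩
      · intro e
        have h1 := (sp_eq_zero_iff hw).mp (hc ▸ e)
        have : (i:ℤ) ≠ 0 := by exact_mod_cast h
        omega
      · rw [hc, Equiv.Perm.inv_apply_self]
  obtain ⟨x, hx0, hxd, hxpos, hxb1, hxb2, hxmax⟩ :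
      ∃ x : ℤ, x ≠ 0 ∧ x < d ∧ w⁻¹ x ≤ (i:ℤ) ∧ -(n:ℤ) ≤ x ∧ x ≤ n ∧
        ∀ z : ℤ, z ≠ 0 → z < d → w⁻¹ z ≤ (i:ℤ) → -(n:ℤ) ≤ z → z ≤ (n:ℤ) → z ≤ x := by
    obtain ⟨b, hb, hmax⟩ := Finset.exists_max_image
      ((Finset.Icc (-(n:ℤ)) (n:ℤ)).filter (fun z => z ≠ 0 ∧ z < d ∧ w⁻¹ z ≤ (i : ℤ))) id
      ⟨c', by rw [Finset.mem_filter, Finset.mem_Icc]; exact ⟨⟨hc'b1, hc'b2⟩, hc'0, hc'd, hposc'⟩⟩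
    rw [Finset.mem_filter, Finset.mem_Icc] at hb
    refine ⟨b, hb.2.1, hb.2.2.1, hb.2.2.2, hb.1.1, hb.1.2, ?_⟩
    intro z k1 k2 k3 k4 k5
    exact hmax z (by rw [Finset.mem_filter, Finset.mem_Icc]; exact ⟨⟨k4, k5⟩, k1, k2, k3⟩)
  set y : ℤ := if x = -1 then 1 else x + 1 with hy
  have hy2 : (x = -1 ∧ y = 1) ∨ (x ≠ -1 ∧ y = x + 1) := by
    rw [hy]; split_ifs with h
    · exact Or.inl ⟨h, rfl⟩
    · exact Or.inr ⟨h, rfl⟩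
  have hxy : x < y := by rcases hy2 with ⟨e1, e2⟩ | ⟨e1, e2⟩ <;> omega
  have hy0 : y ≠ 0 := by rcases hy2 with ⟨e1, e2⟩ | ⟨e1, e2⟩ <;> omega
  have hyd : y ≤ d := by
    rcases hy2 with ⟨e1, e2⟩ | ⟨e1, e2⟩ <;> omega
  have hyb : -(n:ℤ) ≤ y ∧ y ≤ n := by
    have hn1 : 1 ≤ (n:ℤ) := by exact_mod_cast Nat.one_le_iff_ne_zero.mpr (by omega)
    rcases hy2 with ⟨e1, e2⟩ | ⟨e1, e2⟩ <;> omega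
  set p : ℤ := w⁻¹ x with hp
  set q : ℤ := w⁻¹ y with hq
  have hpi : p ≤ (i : ℤ) := hxpos
  have hqval : w q = y := by rw [hq, Equiv.Perm.apply_inv_self]
  have hpval : w p = x := by rw [hp, Equiv.Perm.apply_inv_self]
  have hqi : (i : ℤ) + 1 ≤ q := by
    rcases eq_or_lt_of_le hyd with he | hlt
    · rw [hq, he, hd, Equiv.Perm.inv_apply_self]
    · by_contra hcon
      push_neg at hcon
      have := hxmax y hy0 hlt (by rw [← hq]; omega) hyb.1 hyb.2
      omega
  have hqb : -(n:ℤ) ≤ q ∧ q ≤ n := by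
    have := sp_bound (sp_inv hw) (a := y) (by rw [abs_le]; exact hyb)
    rw [abs_le] at this; exact this
  have hpb : -(n:ℤ) ≤ p ∧ p ≤ n := by
    have := sp_bound (sp_inv hw) (a := x) (by rw [abs_le]; exact ⟨hxb1, hxb2⟩)
    rw [abs_le] at this; exact this
  -- the generator
  set σ : Equiv.Perm ℤ := sB (max x (-x-1)).toNat with hσdef
  have hσ : ∀ z : ℤ, σ z = if z = x then y else if z = y then x
      else if z = -x then -y else if z = -y then -x else z := sB_formula x y hx0 hy2
  have hσ2 := sigma_flip σ x y hx0 hy2 hσ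
  have hσsp : σ ∈ SignedPerm n := sigma_sp σ x y hx0 hy0 ⟨hxb1, hxb2⟩ hyb hσ
  set w' : Equiv.Perm ℤ := σ * w with hw'
  have hw'app : ∀ a : ℤ, w' a = σ (w a) := fun a => rfl
  have hw'sp : w' ∈ SignedPerm n := sp_mul hσsp hw
  -- monotonicity of NFull
  have hsub : NFull n w ⊆ NFull n w' := by
    rintro ⟨a, b⟩ hm
    rw [mem_NF] at hm ⊢
    obtain ⟨h1, h2, h3, h4, h5, h6, h7⟩ := hm
    refine ⟨h1, h2, h3, h4, h5, h6, ?_⟩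
    rw [hw'app, hw'app]
    by_contra hcon
    push_neg at hcon
    have hne : σ (w b) ≠ σ (w a) := by
      intro e
      have := w.injective (σ.injective e)
      omega
    have hflip : σ (w a) < σ (w b) := by omega
    rcases hσ2 (w b) (w a) h7 hflip with ⟨f1, f2⟩ | ⟨f1, f2⟩ | ⟨f1, f2, f3, f4⟩ | ⟨f1, f2, f3, f4⟩
    · -- w b = x, w a = y : b = p, a = q
      have hb : b = p := by rw [hp, ← f1, Equiv.Perm.inv_apply_self]
      have ha : a = q := by rw [hq, ← f2, Equiv.Perm.inv_apply_self]
      omega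
    · -- w b = -y, w a = -x : b = -q, a = -p
      have hb : b = -q := by
        have : w (-q) = -y := by rw [sp_neg hw, hqval]
        rw [← this] at f1
        exact w.injective f1
      have ha : a = -p := by
        have : w (-p) = -x := by rw [sp_neg hw, hpval]
        rw [← this] at f2
        exact w.injective f2
      omega
    · -- w b = -1 = x, w a = 0 : a = 0, b = p ; also x = -1 so p = -q
      have ha : a = 0 := (sp_eq_zero_iff hw).mp f4
      have hbq : b = -q := by
        have h1 : w (-q) = -y := by rw [sp_neg hw, hqval]
        have h2 : w b = w (-q) := by rw [h1, f3, f2]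
        exact w.injective h2
      omega
    · -- w b = 0, w a = 1 = y : b = 0, a = q
      have hb : b = 0 := (sp_eq_zero_iff hw).mp f3
      have ha : a = q := by rw [hq, f2, ← f4, Equiv.Perm.inv_apply_self]
      omega
  -- the gained pair
  have hgain : ∃ pr : ℤ × ℤ, pr ∈ NFull n w' ∧ pr ∉ NFull n w := by
    rcases hy2 with ⟨e1, e2⟩ | ⟨e1, e2⟩
    · refine ⟨((0 : ℤ), q), ?_, ?_⟩
      · rw [mem_NF]
        refine ⟨by omega, by omega, hqb.1, hqb.2, by omega, by omega, ?_⟩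
        rw [hw'app, hw'app, hqval, sp_zero hw, hσ, hσ]
        split_ifs <;> omega
      · rw [mem_NF]
        intro hcon
        have := hcon.2.2.2.2.2.2
        rw [hqval, sp_zero hw] at this
        omega
    · have hpq0 : p + q ≠ 0 := by
        intro e
        have : w (-q) = -y := by rw [sp_neg hw, hqval]
        have hpx : w p = x := hpval
        have : x = -y := by rw [← hpx, show p = -q by omega, this]
        omega
      refine ⟨(p, q), ?_, ?_⟩
      · rw [mem_NF]
        refine ⟨hpb.1, hpb.2, hqb.1, hqb.2, by omega, hpq0, ?_⟩
        rw [hw'app, hw'app, hqval, hpval, hσ, hσ]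
        split_ifs <;> omega
      · rw [mem_NF]
        intro hcon
        have := hcon.2.2.2.2.2.2
        rw [hqval, hpval] at this
        omega
  obtain ⟨pr, hpr1, hpr2⟩ := hgain
  have hcard : (NFull n w).card < (NFull n w').card :=
    Finset.card_lt_card ⟨hsub, fun hall => hpr2 (hall hpr1)⟩
  -- descents
  have hdsub : DesSet n w' ⊆ DesSet n w ∪ {i} := by
    intro k hk
    unfold DesSet at hk
    rw [Finset.mem_filter, Finset.mem_range] at hk
    obtain ⟨hk1, hk2⟩ := hk
    by_contra hcon
    rw [Finset.mem_union, Finset.mem_singleton] at hcon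
    push_neg at hcon
    obtain ⟨hcon1, hcon2⟩ := hcon
    have hkasc : w (k : ℤ) < w ((k : ℤ) + 1) := by
      have hne : w (k : ℤ) ≠ w ((k : ℤ) + 1) := fun e => by
        have := w.injective e; omega
      have : ¬ (w ((k : ℤ) + 1) < w (k : ℤ)) := fun hlt =>
        hcon1 (by unfold DesSet; rw [Finset.mem_filter, Finset.mem_range]; exact ⟨hk1, hlt⟩)
      omega
    rw [hw'app, hw'app] at hk2
    rcases hσ2 (w (k:ℤ)) (w ((k:ℤ)+1)) hkasc hk2 with ⟨f1, f2⟩ | ⟨f1, f2⟩ | ⟨f1, f2, f3, f4⟩ | ⟨f1, f2, f3, f4⟩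
    · -- w k = x, w (k+1) = y : k = p, k+1 = q
      have ha : (k : ℤ) = p := by rw [hp, ← f1, Equiv.Perm.inv_apply_self]
      have hb : (k : ℤ) + 1 = q := by rw [hq, ← f2, Equiv.Perm.inv_apply_self]
      have : (k : ℤ) = (i : ℤ) := by omega
      exact hcon2 (by exact_mod_cast this)
    · -- w k = -y : k = -q ≤ -1 < 0
      have hb : (k : ℤ) = -q := by
        have : w (-q) = -y := by rw [sp_neg hw, hqval]
        rw [← this] at f1
        exact w.injective f1
      omega
    · -- w (k+1) = 0 : k+1 = 0, impossible
      have := (sp_eq_zero_iff hw).mp f4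
      omega
    · -- w k = 0 : k = 0 ; w(k+1) = 1 = y : k+1 = q ≥ i+1 so i = 0 = k
      have hk0 : (k : ℤ) = 0 := (sp_eq_zero_iff hw).mp f3
      have hb : (k : ℤ) + 1 = q := w.injective (by rw [hqval, f2, f4])
      have : (k : ℤ) = (i : ℤ) := by omega
      exact hcon2 (by exact_mod_cast this)
  exact ⟨w', hw'sp, hsub, hcard, hdsub⟩

lemma card_NFull_le : (NFull n w).card ≤ (2*n+1)*(2*n+1) := by
  unfold NFull
  refine le_trans (Finset.card_filter_le _ _) ?_
  rw [Finset.card_product, Int.card_Icc]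
  have : ((n:ℤ) + 1 - -(n:ℤ)).toNat = 2*n+1 := by omega
  rw [this]

lemma galois_main {g : Finset ℕ → Equiv.Perm ℤ}
    (hg : ∀ I ⊆ Finset.range n, g I ∈ SignedPerm n ∧ DesSet n (g I) = I ∧
      ∀ w ∈ SignedPerm n, DesSet n w = I → wle n w (g I)) :
    ∀ (k : ℕ) (w : Equiv.Perm ℤ), w ∈ SignedPerm n → ∀ I, I ⊆ Finset.range n →
      DesSet n w ⊆ I → (2*n+1)*(2*n+1) - (NFull n w).card ≤ k → wle n w (g I) := by
  intro k
  induction k with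
  | zero =>
    intro w hw I hI hDes hmeas
    by_cases hD : DesSet n w = I
    · exact (hg I hI).2.2 w hw hD
    · exfalso
      obtain ⟨i, hiI, hiD⟩ := Finset.exists_of_ssubset (ssubset_of_subset_of_ne hDes hD)
      have hin : i < n := Finset.mem_range.mp (hI hiI)
      obtain ⟨w', hw'sp, hsub, hcard, hdsub⟩ := step hw hin hiD
      have h1 : (NFull n w').card ≤ (2*n+1)*(2*n+1) := card_NFull_le
      omega
  | succ k ih =>
    intro w hw I hI hDes hmeas
    by_cases hD : DesSet n w = I
    · exact (hg I hI).2.2 w hw hD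
    · obtain ⟨i, hiI, hiD⟩ := Finset.exists_of_ssubset (ssubset_of_subset_of_ne hDes hD)
      have hin : i < n := Finset.mem_range.mp (hI hiI)
      obtain ⟨w', hw'sp, hsub, hcard, hdsub⟩ := step hw hin hiD
      have hDes' : DesSet n w' ⊆ I := by
        refine hdsub.trans (Finset.union_subset hDes ?_)
        simp [hiI]
      have h1 : (NFull n w').card ≤ (2*n+1)*(2*n+1) := card_NFull_le
      have hrec : wle n w' (g I) := ih w' hw'sp I hI hDes' (by omega)
      rw [wle_iff hw'sp (hg I hI).1] at hrec
      rw [wle_iff hw (hg I hI).1]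
      exact hsub.trans hrec

end AuxGalois

/-- The pair `(Des, g) : 𝔅ₙ ⇄ 2^{[0,n-1]}` is a Galois connection,
where `g I = ζ_I` is the largest element of the descent class of `I`: `Des` is
order-preserving and surjective, `g` is order-preserving, and
`Des(w) ⊆ I ↔ w ≤ ζ_I` for all `w ∈ 𝔅ₙ` and `I ⊆ {0,…,n-1}`. -/
theorem descent_galois_connection (n : ℕ) (g : Finset ℕ → Equiv.Perm ℤ)
    (hg : ∀ I ⊆ Finset.range n, g I ∈ SignedPerm n ∧ DesSet n (g I) = I ∧
      ∀ w ∈ SignedPerm n, DesSet n w = I → wle n w (g I)) :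
    (∀ u ∈ SignedPerm n, ∀ v ∈ SignedPerm n, wle n u v → DesSet n u ⊆ DesSet n v) ∧
    (∀ I ⊆ Finset.range n, ∃ w ∈ SignedPerm n, DesSet n w = I) ∧
    (∀ I ⊆ Finset.range n, ∀ J ⊆ Finset.range n, I ⊆ J → wle n (g I) (g J)) ∧
    (∀ w ∈ SignedPerm n, ∀ I ⊆ Finset.range n, (DesSet n w ⊆ I ↔ wle n w (g I))) := by
  have mono : ∀ u ∈ SignedPerm n, ∀ v ∈ SignedPerm n, wle n u v → DesSet n u ⊆ DesSet n v := by
    intro u hu v hv huv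
    rw [wle_iff hu hv] at huv
    intro i hi
    rw [des_iff] at hi ⊢
    exact ⟨hi.1, huv hi.2⟩
  have fwd : ∀ w ∈ SignedPerm n, ∀ I, I ⊆ Finset.range n → DesSet n w ⊆ I → wle n w (g I) := by
    intro w hw I hI hDes
    exact galois_main hg ((2*n+1)*(2*n+1)) w hw I hI hDes (by omega)
  refine ⟨mono, ?_, ?_, ?_⟩
  · intro I hI
    exact ⟨g I, (hg I hI).1, (hg I hI).2.1⟩
  · intro I hI J hJ hIJ
    exact fwd (g I) (hg I hI).1 J hJ (by rw [(hg I hI).2.1]; exact hIJ)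
  · intro w hw I hI
    constructor
    · exact fwd w hw I hI
    · intro hle
      have := mono w hw (g I) (hg I hI).1 hle
      rwa [(hg I hI).2.1] at this
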